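/- Let (C, N, (A_i)_{i∈N}, k) be an approval election with n = |N|, k ≥ 1, and (k+1) dividing n. Let (W, π) be a Droop valid assignment whose Monroe score is maximal among all Droop valid assignments for this election. Then W provides Droop-FPJR. -/

import Mathlib

/-- A group `S ⊆ N` is Droop weakly `(ℓ,T)`-cohesive if `|A_i ∩ T| ≥ ℓ` for every
`i ∈ S` and `|S| > |T|·n/(k+1)`.  An outcome `W` provides Droop-FPJR if for every
`ℓ ∈ {1,...,k}`, every `T ⊆ C`, and every Droop weakly `(ℓ,T)`-cohesive group `S`,
we have `|(⋃_{i∈S} A_i) ∩ W| ≥ ℓ`. -/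
def DroopFPJR {V K : Type*} [DecidableEq V] [DecidableEq K]
    (N : Finset V) (C : Finset K) (A : V → Finset K) (k : ℕ) (W : Finset K) : Prop :=
  ∀ ℓ : ℕ, 1 ≤ ℓ → ℓ ≤ k → ∀ T ⊆ C, ∀ S ⊆ N,
    (∀ i ∈ S, ℓ ≤ (A i ∩ T).card) →
    (S.card : ℚ) > (T.card : ℚ) * (N.card : ℚ) / ((k : ℚ) + 1) →
    ℓ ≤ ((S.biUnion A) ∩ W).card

-- double counting helper
lemma double_count {V K : Type*} [DecidableEq V] [DecidableEq K]
    (S : Finset V) (D : Finset K) (A : V → Finset K) :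
    ∑ c ∈ D, (S.filter (fun i => c ∈ A i)).card = ∑ i ∈ S, (A i ∩ D).card := by
  have h1 : ∀ c, (S.filter (fun i => c ∈ A i)).card = ∑ i ∈ S, if c ∈ A i then 1 else 0 :=
    fun c => Finset.card_filter _ _
  have h2 : ∀ i, (A i ∩ D).card = ∑ c ∈ D, if c ∈ A i then 1 else 0 := by
    intro i
    rw [Finset.inter_comm, ← Finset.card_filter]
    congr 1
  simp only [h1, h2]
  exact Finset.sum_comm

-- key arithmetic inequality
lemma key_arith (tc m mp u q dc s0 : ℕ)
    (h1 : tc * q + 1 ≤ s0 + mp * q)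
    (h2 : dc + m ≤ tc) (h3 : m ≤ mp) (h4 : mp + 1 ≤ m + u)
    (h5 : mp + 1 ≤ tc) (h6 : 1 ≤ u) (h7 : 1 ≤ q) :
    dc * q + 1 ≤ s0 * u := by
  zify at *
  nlinarith [mul_nonneg (mul_nonneg (by linarith : (0:ℤ) ≤ (tc:ℤ) - mp - 1) (by linarith : (0:ℤ) ≤ (u:ℤ) - 1)) (by positivity : (0:ℤ) ≤ (q:ℤ)),
    mul_nonneg (by linarith : (0:ℤ) ≤ (mp:ℤ) - m) (by linarith : (0:ℤ) ≤ (q:ℤ) - 1),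
    mul_nonneg (by linarith : (0:ℤ) ≤ (s0:ℤ) - tc*q - 1 + mp*q) (by linarith : (0:ℤ) ≤ (u:ℤ)),
    mul_nonneg (by linarith : (0:ℤ) ≤ (tc:ℤ) - dc - m) (by positivity : (0:ℤ) ≤ (q:ℤ))]

-- an involution of V swapping two disjoint equicardinal finsets
lemma exists_involution {V : Type*} [DecidableEq V] (B H : Finset V)
    (hdisj : Disjoint B H) (hc : B.card = H.card) :
    ∃ t : V → V, (∀ v, t (t v) = v) ∧ (∀ v ∈ B, t v ∈ H) ∧ (∀ v ∈ H, t v ∈ B) ∧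
      (∀ v, v ∉ B → v ∉ H → t v = v) := by
  classical
  let e := Finset.equivOfCardEq hc
  refine ⟨fun v => if h : v ∈ B then (e ⟨v, h⟩ : V) else if h2 : v ∈ H then (e.symm ⟨v, h2⟩ : V) else v, ?_, ?_, ?_, ?_⟩
  · intro v
    by_cases hb : v ∈ B
    · have h1 : ((e ⟨v, hb⟩ : {x // x ∈ H}) : V) ∈ H := (e ⟨v, hb⟩).2
      have h1' : ((e ⟨v, hb⟩ : {x // x ∈ H}) : V) ∉ B := fun hx => (Finset.disjoint_left.mp hdisj hx) h1
      simp only [dif_pos hb, dif_neg h1', dif_pos h1]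
      have : (⟨(e ⟨v, hb⟩ : V), h1⟩ : {x // x ∈ H}) = e ⟨v, hb⟩ := Subtype.ext rfl
      rw [this, Equiv.symm_apply_apply]
    · by_cases hh : v ∈ H
      · have h1 : ((e.symm ⟨v, hh⟩ : {x // x ∈ B}) : V) ∈ B := (e.symm ⟨v, hh⟩).2
        simp only [dif_neg hb, dif_pos hh, dif_pos h1]
        have : (⟨(e.symm ⟨v, hh⟩ : V), h1⟩ : {x // x ∈ B}) = e.symm ⟨v, hh⟩ := Subtype.ext rfl
        rw [this, Equiv.apply_symm_apply]
      · simp only [dif_neg hb, dif_neg hh]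
  · intro v hv
    simp only [dif_pos hv]
    exact (e ⟨v, hv⟩).2
  · intro v hv
    have hb : v ∉ B := fun hx => (Finset.disjoint_left.mp hdisj hx) hv
    simp only [dif_neg hb, dif_pos hv]
    exact (e.symm ⟨v, hv⟩).2
  · intro v hb hh
    simp only [dif_neg hb, dif_neg hh]

/-- Suppose `(k+1) ∣ n` and `(W, π)` is a Droop valid assignment
(`W ⊆ C`, `|W| = k`, `π : N → W ∪ {d}` with every preimage class—including that
of the dummy candidate `d ∉ C`—of size exactly `n/(k+1)`) whose Monroe score is
maximal among all Droop valid assignments.  Then `W` provides Droop-FPJR. -/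
theorem stmt_7 {V K : Type*} [DecidableEq V] [DecidableEq K]
    (N : Finset V) (C : Finset K) (A : V → Finset K) (k : ℕ)
    (hA : ∀ i ∈ N, A i ⊆ C) (hk : 1 ≤ k) (hdvd : (k + 1) ∣ N.card)
    (d : K) (hd : d ∉ C)
    (W : Finset K) (π : V → K)
    (hWC : W ⊆ C) (hWcard : W.card = k)
    (hπ : ∀ i ∈ N, π i ∈ insert d W)
    (hquota : ∀ c ∈ W, (N.filter (fun i => π i = c)).card = N.card / (k + 1))
    (hdummy : (N.filter (fun i => π i = d)).card = N.card / (k + 1))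
    (hmax : ∀ (W' : Finset K) (π' : V → K), W' ⊆ C → W'.card = k →
      (∀ i ∈ N, π' i ∈ insert d W') →
      (∀ c ∈ W', (N.filter (fun i => π' i = c)).card = N.card / (k + 1)) →
      (N.filter (fun i => π' i = d)).card = N.card / (k + 1) →
      (N.filter (fun i => π' i ∈ A i)).card ≤ (N.filter (fun i => π i ∈ A i)).card) :
    DroopFPJR N C A k W := by
    classical
  intro ℓ hℓ1 hℓk T hTC S hSN hcoh hsize
  by_contra hcon
  push_neg at hcon
  set q : ℕ := N.card / (k + 1) with hqdef
  have hn : (k + 1) * q = N.card := Nat.mul_div_cancel' hdvd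
  -- Step 0 : natural-number size bound
  have hS1 : T.card * q + 1 ≤ S.card := by
    have hrat : ((T.card * q : ℕ) : ℚ) < (S.card : ℚ) := by
      have hrw : ((T.card : ℚ) * (N.card : ℚ)) / ((k : ℚ) + 1) = ((T.card * q : ℕ) : ℚ) := by
        rw [← hn]
        push_cast
        field_simp
      rw [hrw] at hsize
      exact hsize
    exact_mod_cast hrat
  have hSne : S.Nonempty := Finset.card_pos.mp (by omega)
  have hq1 : 1 ≤ q := by
    rcases Nat.eq_zero_or_pos q with h | h
    · exfalso
      have hN0 : N.card = 0 := by rw [← hn, h, mul_zero]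
      have hle := Finset.card_le_card hSN
      omega
    · exact h
  -- basic sets
  set W' : Finset K := (S.biUnion A) ∩ W with hW'def
  have hm' : W'.card < ℓ := hcon
  have hW'W : W' ⊆ W := Finset.inter_subset_right
  set m : ℕ := (T ∩ W').card with hmdef
  have hmm' : m ≤ W'.card := Finset.card_le_card Finset.inter_subset_right
  have hAW : ∀ i ∈ S, A i ∩ W ⊆ W' := by
    intro i hi x hx
    rw [hW'def]
    exact Finset.mem_inter.mpr ⟨Finset.mem_biUnion.mpr ⟨i, hi, (Finset.mem_inter.mp hx).1⟩,
      (Finset.mem_inter.mp hx).2⟩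
  set D : Finset K := T \ W with hDdef
  -- each S-voter approves ≥ ℓ - m candidates in D
  have hAD : ∀ i ∈ S, ℓ ≤ (A i ∩ D).card + m := by
    intro i hi
    have hsub : A i ∩ T ⊆ (A i ∩ D) ∪ (T ∩ W') := by
      intro x hx
      rcases Finset.mem_inter.mp hx with ⟨hxA, hxT⟩
      by_cases hxW : x ∈ W
      · exact Finset.mem_union_right _ (Finset.mem_inter.mpr ⟨hxT,
          hAW i hi (Finset.mem_inter.mpr ⟨hxA, hxW⟩)⟩)
      · exact Finset.mem_union_left _ (Finset.mem_inter.mpr ⟨hxA,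
          Finset.mem_sdiff.mpr ⟨hxT, hxW⟩⟩)
    calc ℓ ≤ (A i ∩ T).card := hcoh i hi
      _ ≤ ((A i ∩ D) ∪ (T ∩ W')).card := Finset.card_le_card hsub
      _ ≤ (A i ∩ D).card + m := Finset.card_union_le _ _
  -- split S by whether assigned inside W'
  set S₀ : Finset V := S.filter (fun i => π i ∉ W') with hS₀def
  have hScl : (S.filter (fun i => π i ∈ W')).card ≤ W'.card * q := by
    have hsub : S.filter (fun i => π i ∈ W') ⊆ W'.biUnion (fun x => N.filter (fun i => π i = x)) := by
      intro i hi
      rcases Finset.mem_filter.mp hi with ⟨hiS, hiW'⟩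
      exact Finset.mem_biUnion.mpr ⟨π i, hiW', Finset.mem_filter.mpr ⟨hSN hiS, rfl⟩⟩
    calc (S.filter (fun i => π i ∈ W')).card
        ≤ _ := Finset.card_le_card hsub
      _ ≤ ∑ x ∈ W', (N.filter (fun i => π i = x)).card := Finset.card_biUnion_le
      _ = ∑ _x ∈ W', q := by
          apply Finset.sum_congr rfl
          intro x hx
          exact hquota x (hW'W hx)
      _ = W'.card * q := by rw [Finset.sum_const, smul_eq_mul]
  have hsplitS : (S.filter (fun i => π i ∈ W')).card + S₀.card = S.card := by
    rw [hS₀def]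
    exact Finset.card_filter_add_card_filter_not _
  have hS₀unsat : ∀ i ∈ S₀, π i ∉ A i := by
    intro i hi hsat
    rcases Finset.mem_filter.mp hi with ⟨hiS, hiW'⟩
    have hiN : i ∈ N := hSN hiS
    have hπi := hπ i hiN
    rcases Finset.mem_insert.mp hπi with h | h
    · exact hd (h ▸ hA i hiN hsat)
    · exact hiW' (hAW i hiS (Finset.mem_inter.mpr ⟨hsat, h⟩))
  -- pigeonhole: some c in D has ≥ q+1 approvers in S₀
  have hTc : ℓ ≤ T.card := by
    obtain ⟨i, hi⟩ := hSne
    calc ℓ ≤ (A i ∩ T).card := hcoh i hi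
      _ ≤ T.card := Finset.card_le_card Finset.inter_subset_right
  have hDm : D.card + m ≤ T.card := by
    have h1 : D.card + (T ∩ W).card = T.card := Finset.card_sdiff_add_card_inter T W
    have h2 : m ≤ (T ∩ W).card := by
      apply Finset.card_le_card
      intro x hx
      exact Finset.mem_inter.mpr ⟨(Finset.mem_inter.mp hx).1, hW'W (Finset.mem_inter.mp hx).2⟩
    omega
  obtain ⟨u, hu, hu1⟩ : ∃ u, ℓ = m + u ∧ 1 ≤ u := ⟨ℓ - m, by omega, by omega⟩
  have hkey : D.card * q + 1 ≤ S₀.card * u := by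
    apply key_arith T.card m W'.card u q D.card S₀.card
    · omega
    · exact hDm
    · exact hmm'
    · omega
    · omega
    · exact hu1
    · exact hq1
  obtain ⟨c, hcD, hcR⟩ : ∃ c ∈ D, q + 1 ≤ (S₀.filter (fun i => c ∈ A i)).card := by
    by_contra hno
    push_neg at hno
    have hsum : ∑ c ∈ D, (S₀.filter (fun i => c ∈ A i)).card ≤ D.card * q := by
      calc ∑ c ∈ D, (S₀.filter (fun i => c ∈ A i)).card
          ≤ ∑ _c ∈ D, q := Finset.sum_le_sum (fun c hc => by have := hno c hc; omega)
        _ = D.card * q := by rw [Finset.sum_const, smul_eq_mul]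
    have hsum2 : S₀.card * u ≤ ∑ i ∈ S₀, (A i ∩ D).card := by
      calc S₀.card * u = ∑ _i ∈ S₀, u := by rw [Finset.sum_const, smul_eq_mul]
        _ ≤ ∑ i ∈ S₀, (A i ∩ D).card := Finset.sum_le_sum (fun i hi => by
            have := hAD i (Finset.mem_filter.mp hi).1; omega)
    rw [← double_count] at hsum2
    omega
    -- R : unsatisfied approvers of c in S₀
  set R : Finset V := S₀.filter (fun i => c ∈ A i) with hRdef
  have hRS₀ : R ⊆ S₀ := Finset.filter_subset _ _
  have hRN : R ⊆ N := fun i hi => hSN (Finset.mem_filter.mp (hRS₀ hi)).1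
  obtain ⟨i0, hi0R, hi0d⟩ : ∃ i ∈ R, π i ≠ d := by
    by_contra hall
    push_neg at hall
    have hsub : R ⊆ N.filter (fun i => π i = d) := fun i hi =>
      Finset.mem_filter.mpr ⟨hRN hi, hall i hi⟩
    have hle := Finset.card_le_card hsub
    rw [hdummy] at hle
    omega
  set w : K := π i0 with hwdef
  have hi0N : i0 ∈ N := hRN hi0R
  have hwW : w ∈ W := by
    rcases Finset.mem_insert.mp (hπ i0 hi0N) with h | h
    · exact absurd h hi0d
    · exact h
  have hcT : c ∈ T := (Finset.mem_sdiff.mp hcD).1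
  have hcW : c ∉ W := (Finset.mem_sdiff.mp hcD).2
  have hcC : c ∈ C := hTC hcT
  have hcd : c ≠ d := fun h => hd (h ▸ hcC)
  have hcw : c ≠ w := fun h => hcW (h ▸ hwW)
  have hwd : w ≠ d := hi0d
  -- choose Q ⊆ R of size q containing i0
  obtain ⟨Q₀, hQ₀sub, hQ₀card⟩ := Finset.exists_subset_card_eq (s := R.erase i0) (n := q - 1)
    (by have := Finset.card_erase_of_mem hi0R; omega)
  set Q : Finset V := insert i0 Q₀ with hQdef
  have hi0Q : i0 ∈ Q := Finset.mem_insert_self _ _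
  have hQR : Q ⊆ R := by
    intro x hx
    rcases Finset.mem_insert.mp hx with h | h
    · exact h ▸ hi0R
    · exact Finset.erase_subset _ _ (hQ₀sub h)
  have hQcard : Q.card = q := by
    rw [hQdef, Finset.card_insert_of_notMem (fun h => (Finset.notMem_erase i0 R) (hQ₀sub h)),
      hQ₀card]
    omega
  have hQN : Q ⊆ N := fun i hi => hRN (hQR hi)
  -- the class of w and the exchange sets
  set cls : Finset V := N.filter (fun i => π i = w) with hclsdef
  have hclscard : cls.card = q := hquota w hwW
  set B : Finset V := cls \ Q with hBdef
  set H : Finset V := Q \ cls with hHdef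
  have hi0cls : i0 ∈ cls := Finset.mem_filter.mpr ⟨hi0N, rfl⟩
  have hBH : B.card = H.card := by
    rw [hBdef, hHdef]
    have h1 := Finset.card_sdiff_add_card_inter cls Q
    have h2 := Finset.card_sdiff_add_card_inter Q cls
    rw [Finset.inter_comm] at h2
    omega
  have hBq : B.card + 1 ≤ q := by
    rw [hBdef]
    have h1 := Finset.card_sdiff_add_card_inter cls Q
    have h2 : 1 ≤ (cls ∩ Q).card :=
      Finset.card_pos.mpr ⟨i0, Finset.mem_inter.mpr ⟨hi0cls, hi0Q⟩⟩
    omega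
  have hdisjBH : Disjoint B H := by
    rw [Finset.disjoint_left]
    intro x hxB hxH
    exact (Finset.mem_sdiff.mp hxH).2 ((Finset.mem_sdiff.mp hxB).1)
  have hBN : B ⊆ N := fun x hx => (Finset.mem_filter.mp (Finset.mem_sdiff.mp hx).1).1
  have hHN : H ⊆ N := fun x hx => hQN (Finset.mem_sdiff.mp hx).1
  obtain ⟨t, htinv, htB, htH, htfix⟩ := exists_involution B H hdisjBH hBH
  have htN : ∀ v ∈ N, t v ∈ N := by
    intro v hv
    by_cases hb : v ∈ B
    · exact hHN (htB v hb)
    · by_cases hh : v ∈ H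
      · exact hBN (htH v hh)
      · rw [htfix v hb hh]; exact hv
  -- the swap of w and c on candidates
  set sw : K → K := fun y => if y = w then c else if y = c then w else y with hswdef
  have hsww : sw w = c := by simp [hswdef]
  have hswc : sw c = w := by simp [hswdef, hcw]
  have hswother : ∀ y, y ≠ w → y ≠ c → sw y = y := by
    intro y h1 h2; simp [hswdef, h1, h2]
  have hswinv : ∀ y, sw (sw y) = y := by
    intro y
    by_cases h1 : y = w
    · rw [h1, hsww, hswc]
    · by_cases h2 : y = c
      · rw [h2, hswc, hsww]
      · rw [hswother y h1 h2, hswother y h1 h2]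
  -- counting transfer along the involution t
  have hcardt : ∀ y : K,
      (N.filter (fun i => π (t i) = y)).card = (N.filter (fun i => π i = y)).card := by
    intro y
    apply Finset.card_bij (fun i _ => t i)
    · intro a ha
      rcases Finset.mem_filter.mp ha with ⟨haN, hav⟩
      exact Finset.mem_filter.mpr ⟨htN a haN, hav⟩
    · intro a1 h1 a2 h2 heq
      have h3 := congrArg t heq
      rwa [htinv, htinv] at h3
    · intro b hb
      rcases Finset.mem_filter.mp hb with ⟨hbN, hbv⟩
      exact ⟨t b, Finset.mem_filter.mpr ⟨htN b hbN, by rw [htinv]; exact hbv⟩, htinv b⟩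
  -- new committee and assignment
  set W₂ : Finset K := insert c (W.erase w) with hW₂def
  set π₂ : V → K := fun i => sw (π (t i)) with hπ₂def
  have hπ₂app : ∀ i, π₂ i = sw (π (t i)) := fun i => rfl
  have hW₂C : W₂ ⊆ C := by
    intro x hx
    rcases Finset.mem_insert.mp hx with h | h
    · exact h ▸ hcC
    · exact hWC (Finset.erase_subset _ _ h)
  have hcerase : c ∉ W.erase w := fun h => hcW (Finset.erase_subset _ _ h)
  have hW₂card : W₂.card = k := by
    rw [hW₂def, Finset.card_insert_of_notMem hcerase, Finset.card_erase_of_mem hwW, hWcard]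
    omega
  have hπ₂mem : ∀ i ∈ N, π₂ i ∈ insert d W₂ := by
    intro i hi
    have h := hπ (t i) (htN i hi)
    rcases Finset.mem_insert.mp h with h1 | h1
    · rw [hπ₂app, h1, hswother d (Ne.symm hwd) (Ne.symm hcd)]
      exact Finset.mem_insert_self _ _
    · by_cases h2 : π (t i) = w
      · rw [hπ₂app, h2, hsww]
        exact Finset.mem_insert_of_mem (Finset.mem_insert_self _ _)
      · have h3 : π (t i) ≠ c := fun hc' => hcW (hc' ▸ h1)
        rw [hπ₂app, hswother _ h2 h3]
        exact Finset.mem_insert_of_mem (Finset.mem_insert_of_mem (Finset.mem_erase.mpr ⟨h2, h1⟩))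
  have hfilter₂ : ∀ x : K,
      (N.filter (fun i => π₂ i = x)).card = (N.filter (fun i => π i = sw x)).card := by
    intro x
    have heq : N.filter (fun i => π₂ i = x) = N.filter (fun i => π (t i) = sw x) := by
      apply Finset.filter_congr
      intro i _
      rw [hπ₂app]
      constructor
      · intro h; rw [← h, hswinv]
      · intro h; rw [h, hswinv]
    rw [heq, hcardt]
  have hqW₂ : ∀ x ∈ W₂, (N.filter (fun i => π₂ i = x)).card = N.card / (k + 1) := by
    intro x hx
    rw [hfilter₂]
    rcases Finset.mem_insert.mp hx with h | h
    · rw [h, hswc]; exact hquota w hwW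
    · rcases Finset.mem_erase.mp h with ⟨hxw, hxW⟩
      have hxc : x ≠ c := fun hh => hcW (hh ▸ hxW)
      rw [hswother x hxw hxc]; exact hquota x hxW
  have hd₂ : (N.filter (fun i => π₂ i = d)).card = N.card / (k + 1) := by
    rw [hfilter₂, hswother d (Ne.symm hwd) (Ne.symm hcd)]; exact hdummy
  -- satisfaction analysis
  have hQc : ∀ i ∈ Q, π₂ i = c := by
    intro i hi
    by_cases hh : i ∈ H
    · have htiB : t i ∈ B := htH i hh
      have hpw : π (t i) = w := (Finset.mem_filter.mp (Finset.mem_sdiff.mp htiB).1).2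
      rw [hπ₂app, hpw, hsww]
    · have hicls : i ∈ cls := by
        by_contra hic
        exact hh (Finset.mem_sdiff.mpr ⟨hi, hic⟩)
      have hiB : i ∉ B := fun hb => (Finset.mem_sdiff.mp hb).2 hi
      rw [hπ₂app, htfix i hiB hh, (Finset.mem_filter.mp hicls).2, hsww]
  have hrest : ∀ i ∈ N, i ∉ Q → i ∉ B → π₂ i = π i := by
    intro i hiN hiQ hiB
    have hiH : i ∉ H := fun h => hiQ (Finset.mem_sdiff.mp h).1
    have hicls : i ∉ cls := fun h => hiB (Finset.mem_sdiff.mpr ⟨h, hiQ⟩)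
    have h1 : π i ≠ w := fun h => hicls (Finset.mem_filter.mpr ⟨hiN, h⟩)
    have h2 : π i ≠ c := by
      intro h
      rcases Finset.mem_insert.mp (hπ i hiN) with hh | hh
      · exact hcd (h.symm.trans hh)
      · exact hcW (h ▸ hh)
    rw [hπ₂app, htfix i hiB hiH, hswother _ h1 h2]
  -- decompose N into Q ∪ B ∪ rest
  have hQB : Disjoint Q B := by
    rw [Finset.disjoint_left]
    intro x hx hxB
    exact (Finset.mem_sdiff.mp hxB).2 hx
  set rest : Finset V := N \ (Q ∪ B) with hrestdef
  have hQBN : Q ∪ B ⊆ N := Finset.union_subset hQN hBN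
  have hNsplit : (Q ∪ B) ∪ rest = N := Finset.union_sdiff_of_subset hQBN
  have hdisjrest : Disjoint (Q ∪ B) rest := Finset.disjoint_sdiff
  have hdecomp : ∀ (P : V → Prop) [DecidablePred P],
      (N.filter P).card = (Q.filter P).card + (B.filter P).card + (rest.filter P).card := by
    intro P _
    have d1 : Disjoint (Q.filter P) (B.filter P) := Finset.disjoint_filter_filter hQB
    have d2 : Disjoint (Q.filter P ∪ B.filter P) (rest.filter P) := by
      rw [← Finset.filter_union]
      exact Finset.disjoint_filter_filter hdisjrest
    conv_lhs => rw [← hNsplit]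
    rw [Finset.filter_union, Finset.filter_union,
      Finset.card_union_of_disjoint d2, Finset.card_union_of_disjoint d1]
  have hnew := hdecomp (fun i => π₂ i ∈ A i)
  have hold := hdecomp (fun i => π i ∈ A i)
  have hQold : (Q.filter (fun i => π i ∈ A i)).card = 0 := by
    rw [Finset.filter_false_of_mem, Finset.card_empty]
    intro i hi
    exact hS₀unsat i (hRS₀ (hQR hi))
  have hQnew : (Q.filter (fun i => π₂ i ∈ A i)).card = q := by
    rw [Finset.filter_true_of_mem, hQcard]
    intro i hi
    rw [hQc i hi]
    exact (Finset.mem_filter.mp (hQR hi)).2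
  have hrestcong : rest.filter (fun i => π₂ i ∈ A i) = rest.filter (fun i => π i ∈ A i) := by
    apply Finset.filter_congr
    intro i hi
    rcases Finset.mem_sdiff.mp hi with ⟨hiN, hiQB⟩
    rw [hrest i hiN (fun h => hiQB (Finset.mem_union_left _ h))
      (fun h => hiQB (Finset.mem_union_right _ h))]
  have hBold : (B.filter (fun i => π i ∈ A i)).card ≤ B.card := Finset.card_filter_le _ _
  have hscore := hmax W₂ π₂ hW₂C hW₂card hπ₂mem hqW₂ hd₂
  rw [hnew, hold, hQold, hQnew, hrestcong] at hscore
  omega
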